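/- arXiv:2403.19834 — 2 statements merged into one kernel-verified Lean document; each statement's English description precedes it below -/
import Mathlib

section
/- Consider the queue protocol: each of N agents keeps a queue q_{i,k} ∈ ℝ^τ; at every iteration k ≥ 0 all agents simultaneously replace q_{i,k}(l) by Σ_{j=1}^N W_{ij}·q_{j,k}(l) for every slot l = 1,…,τ, then append a_k(i) as the (τ+1)-st entry to form q^{(1)}_{i,k} ∈ ℝ^{τ+1}, and finally set q_{i,k+1} equal to q^{(1)}_{i,k} with its first entry removed. Then for every iteration k ≥ τ and every agent i, the first entry of q^{(1)}_{i,k} equals Σ_{j=1}^N (W^τ)_{ij} · a_{k−τ}(j); i.e., the head of the queue is the τ-step W-average of the values appended τ iterations earlier. -/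
open Matrix

/-- The head of the queue in the consensus protocol of Algorithm 1 is the `τ`-step
`W`-average of the values appended `τ` iterations earlier. -/
theorem queue_protocol_head_eq
    (N τ : ℕ) (hN : 1 ≤ N) (hτ : 1 ≤ τ)
    (W : Matrix (Fin N) (Fin N) ℝ)
    (a : ℕ → Fin N → ℝ)
    (q : ℕ → Fin N → Fin τ → ℝ)
    (q1 : ℕ → Fin N → Fin (τ + 1) → ℝ)
    -- at iteration `k`, each slot of the queue is `W`-averaged and `a_k(i)` is appended
    (hq1 : ∀ k i, q1 k i = Fin.snoc (fun l => ∑ j, W i j * q k j l) (a k i))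
    -- the next queue is the augmented queue with its first entry removed
    (hq : ∀ k i l, q (k + 1) i l = q1 k i l.succ) :
    ∀ k, τ ≤ k → ∀ i, q1 k i 0 = ∑ j, (W ^ τ) i j * a (k - τ) j := by
  have key : ∀ m : ℕ, ∀ k, m ≤ k → ∀ i, ∀ v : ℕ, ∀ hv : v + m ≤ τ,
      q1 k i ⟨v, by omega⟩ = ∑ j, (W ^ m) i j * q1 (k - m) j ⟨v + m, by omega⟩ := by
    intro m
    induction m with
    | zero =>
      intro k _ i v hv
      simp [Matrix.one_apply]
    | succ m ih =>
      intro k hk i v hv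
      obtain ⟨k', rfl⟩ : ∃ k', k = k' + 1 := ⟨k - 1, by omega⟩
      have hv' : v < τ := by omega
      have h0 : (⟨v, by omega⟩ : Fin (τ+1)) = Fin.castSucc ⟨v, hv'⟩ := rfl
      rw [hq1, h0, Fin.snoc_castSucc]
      have hstep : ∀ j, q (k'+1) j ⟨v, hv'⟩ = q1 k' j ⟨v+1, by omega⟩ := by
        intro j; rw [hq]; rfl
      simp_rw [hstep]
      have hrec : ∀ j, q1 k' j ⟨v+1, by omega⟩
          = ∑ j', (W ^ m) j j' * q1 (k' - m) j' ⟨v+1+m, by omega⟩ :=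
        fun j => ih k' (by omega) j (v+1) (by omega)
      simp_rw [hrec, Finset.mul_sum]
      rw [Finset.sum_comm]
      have hk1 : k' + 1 - (m+1) = k' - m := by omega
      rw [hk1]
      refine Finset.sum_congr rfl fun j' _ => ?_
      have hW : (W ^ (m+1)) i j' = ∑ j, W i j * (W ^ m) j j' := by
        rw [pow_succ']
        simp [Matrix.mul_apply]
      rw [hW, Finset.sum_mul]
      refine Finset.sum_congr rfl fun j _ => ?_
      have hidx : (⟨v+1+m, by omega⟩ : Fin (τ+1)) = ⟨v+(m+1), by omega⟩ := by
        ext; simp; omega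
      rw [hidx]; ring
  intro k hk i
  have h := key τ k hk i 0 (by omega)
  have h0 : (⟨0, by omega⟩ : Fin (τ+1)) = 0 := rfl
  rw [h0] at h
  rw [h]
  refine Finset.sum_congr rfl fun j _ => ?_
  congr 1
  have hlast : (⟨0 + τ, by omega⟩ : Fin (τ+1)) = Fin.last τ := by ext; simp
  rw [hlast, hq1, Fin.snoc_last]
end

section
/- Let ζ : ℝ^N → ℝ be L₀-Lipschitz and let δ > 0. Then the Gaussian smoothing ζ_δ(u) = E_{v∼N(0,I_N)}[ζ(u + δv)] is differentiable on ℝ^N and its gradient satisfies ∇ζ_δ(u) = (1/δ)·E_{v∼N(0,I_N)}[ζ(u + δv)·v] for every u ∈ ℝ^N. -/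
open MeasureTheory ProbabilityTheory Matrix

/-- The standard Gaussian distribution `N(0, I_N)` on `ℝ^N`,
as the product of `N` standard normal distributions. -/
noncomputable def stdGaussianPi (N : ℕ) : Measure (Fin N → ℝ) :=
  Measure.pi fun _ => gaussianReal 0 1

/-- View a function `Fin N → ℝ` as an element of Euclidean space (with the `ℓ²` norm). -/
noncomputable def evec (N : ℕ) (x : Fin N → ℝ) : EuclideanSpace ℝ (Fin N) := WithLp.toLp 2 x

section Auxiliary

open Real

open scoped ENNReal NNReal

lemma continuous_evec (N : ℕ) : Continuous (evec N) := by
  have : evec N = ⇑(PiLp.continuousLinearEquiv 2 ℝ (fun _ : Fin N => ℝ)).symm := rfl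
  rw [this]; exact (PiLp.continuousLinearEquiv 2 ℝ _).symm.continuous

lemma norm_evec_sq (N : ℕ) (w : Fin N → ℝ) : ‖evec N w‖ ^ 2 = ∑ i, (w i) ^ 2 := by
  rw [EuclideanSpace.norm_eq, Real.sq_sqrt (by positivity)]
  exact Finset.sum_congr rfl fun i _ => sq_abs _

lemma norm_evec_le_sum (N : ℕ) (w : Fin N → ℝ) : ‖evec N w‖ ≤ ∑ i, |w i| := by
  rw [EuclideanSpace.norm_eq]
  calc √(∑ i, ‖evec N w i‖ ^ 2) = √(∑ i, |w i| ^ 2) := by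
        simp only [Real.norm_eq_abs]; rfl
    _ ≤ √((∑ i, |w i|) ^ 2) := by
        apply Real.sqrt_le_sqrt
        have h : ∀ i ∈ Finset.univ, |w i| ^ 2 ≤ |w i| * (∑ j, |w j|) := fun i _ => by
          rw [sq]
          exact mul_le_mul_of_nonneg_left
            (Finset.single_le_sum (fun j _ => abs_nonneg (w j)) (Finset.mem_univ i))
            (abs_nonneg _)
        calc ∑ i, |w i| ^ 2 ≤ ∑ i, |w i| * (∑ j, |w j|) := Finset.sum_le_sum h
          _ = (∑ i, |w i|) ^ 2 := by rw [← Finset.sum_mul, sq]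
    _ = ∑ i, |w i| := Real.sqrt_sq (Finset.sum_nonneg fun i _ => abs_nonneg _)

lemma integrable_exp_abs_sub_sq (s : ℝ) :
    Integrable (fun t : ℝ => Real.exp (s * |t| - t ^ 2 / 2)) := by
  apply Integrable.mono' ((integrable_exp_neg_mul_sq
    (show (0:ℝ) < 1/4 by norm_num)).const_mul (Real.exp (s ^ 2)))
  · exact (Real.continuous_exp.comp ((continuous_const.mul continuous_abs).sub
      ((continuous_pow 2).div_const 2))).aestronglyMeasurable
  · filter_upwards with t
    rw [Real.norm_eq_abs, abs_of_pos (Real.exp_pos _), ← Real.exp_add]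
    apply Real.exp_le_exp.mpr
    nlinarith [sq_nonneg (|t| / 2 - s), sq_abs t]

lemma integrable_master (N : ℕ) (s : ℝ) :
    Integrable (fun w : Fin N → ℝ =>
      Real.exp (s * (∑ i, |w i|) - (∑ i, (w i) ^ 2) / 2)) := by
  have heq : (fun w : Fin N → ℝ => Real.exp (s * (∑ i, |w i|) - (∑ i, (w i) ^ 2) / 2))
      = fun w : Fin N → ℝ => ∏ i, (fun t : ℝ => Real.exp (s * |t| - t ^ 2 / 2)) (w i) := by
    funext w
    rw [← Real.exp_sum]
    congr 1
    rw [Finset.sum_sub_distrib, Finset.mul_sum, Finset.sum_div]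
  rw [heq]
  exact Integrable.fintype_prod fun _ => integrable_exp_abs_sub_sq s

lemma stdGaussianPi_eq_withDensity (N : ℕ) :
    stdGaussianPi N = (volume : Measure (Fin N → ℝ)).withDensity
      (fun w => ENNReal.ofReal (∏ i, gaussianPDFReal 0 1 (w i))) := by
  refine Measure.pi_eq fun s hs => ?_
  have hint : Integrable (fun w : Fin N → ℝ =>
      ∏ i, (s i).indicator (gaussianPDFReal 0 1) (w i)) := by
    exact Integrable.fintype_prod fun i =>
      (integrable_gaussianPDFReal 0 1).indicator (hs i)
  rw [withDensity_apply _ (MeasurableSet.univ_pi hs),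
    ← lintegral_indicator (MeasurableSet.univ_pi hs)]
  have hind : (fun w => (Set.univ.pi s).indicator
      (fun w : Fin N → ℝ => ENNReal.ofReal (∏ i, gaussianPDFReal 0 1 (w i))) w)
      = fun w : Fin N → ℝ =>
        ENNReal.ofReal (∏ i, (s i).indicator (gaussianPDFReal 0 1) (w i)) := by
    funext w
    by_cases hw : w ∈ Set.univ.pi s
    · rw [Set.indicator_of_mem hw]
      congr 1
      exact Finset.prod_congr rfl fun i _ =>
        (Set.indicator_of_mem (hw i (Set.mem_univ i)) _).symm
    · rw [Set.indicator_of_notMem hw]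
      rw [Set.mem_univ_pi] at hw
      push_neg at hw
      obtain ⟨i, hi⟩ := hw
      rw [Finset.prod_eq_zero (Finset.mem_univ i) (Set.indicator_of_notMem hi _),
        ENNReal.ofReal_zero]
  rw [hind, ← ofReal_integral_eq_lintegral_ofReal hint ?_]
  · rw [MeasureTheory.integral_fintype_prod_volume_eq_prod (f := fun (i : Fin N)
      (x : ℝ) => (s i).indicator (gaussianPDFReal 0 1) x),
      ENNReal.ofReal_prod_of_nonneg (fun i _ => integral_nonneg fun x =>
        Set.indicator_nonneg (fun x _ => gaussianPDFReal_nonneg 0 1 x) _)]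
    refine Finset.prod_congr rfl fun i _ => ?_
    rw [integral_indicator (hs i), gaussianReal_apply_eq_integral 0 one_ne_zero (s i)]
  · filter_upwards with w
    exact Finset.prod_nonneg fun i _ =>
      Set.indicator_nonneg (fun x _ => gaussianPDFReal_nonneg 0 1 x) _

/-- The normalizing constant of the standard Gaussian density on `ℝ^N`. -/
noncomputable def Cg (N : ℕ) : ℝ := (Real.sqrt (2 * Real.pi))⁻¹ ^ N

lemma Cg_pos (N : ℕ) : 0 < Cg N := by
  have h : 0 < Real.sqrt (2 * Real.pi) := Real.sqrt_pos.mpr (by positivity)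
  rw [Cg]; positivity

lemma prodPDF_eq (N : ℕ) (w : Fin N → ℝ) :
    (∏ i, gaussianPDFReal 0 1 (w i))
      = Cg N * Real.exp (-‖evec N w‖ ^ 2 / 2) := by
  have hn : ‖evec N w‖ ^ 2 = ∑ i, (w i) ^ 2 := norm_evec_sq N w
  simp only [gaussianPDFReal, Cg]
  rw [Finset.prod_mul_distrib, Finset.prod_const, ← Real.exp_sum, hn]
  simp only [NNReal.coe_one, mul_one, sub_zero, Finset.card_univ, Fintype.card_fin]
  congr 1
  rw [← Finset.sum_div, Finset.sum_neg_distrib]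

lemma integral_stdGaussianPi (N : ℕ) {G : Type*} [NormedAddCommGroup G] [NormedSpace ℝ G]
    (f : (Fin N → ℝ) → G) :
    ∫ w, f w ∂(stdGaussianPi N)
      = ∫ w, (Cg N * Real.exp (-‖evec N w‖ ^ 2 / 2)) • f w := by
  rw [stdGaussianPi_eq_withDensity]
  have h : (fun w : Fin N → ℝ => ENNReal.ofReal (∏ i, gaussianPDFReal 0 1 (w i)))
      = fun w : Fin N → ℝ =>
        ((fun w : Fin N → ℝ => Real.toNNReal (∏ i, gaussianPDFReal 0 1 (w i))) w : ℝ≥0∞) := rfl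
  rw [h, integral_withDensity_eq_integral_smul (by
    exact (Finset.measurable_prod _ fun i _ =>
      (measurable_gaussianPDFReal 0 1).comp (measurable_pi_apply i)).real_toNNReal) f]
  refine integral_congr_ae (Filter.Eventually.of_forall fun w => ?_)
  show (∏ i, gaussianPDFReal 0 1 (w i)).toNNReal • f w = _
  rw [NNReal.smul_def, Real.coe_toNNReal _ (Finset.prod_nonneg fun i _ =>
    gaussianPDFReal_nonneg 0 1 _), prodPDF_eq]

lemma exp_quad_bound {R t n : ℝ} (hR : 0 ≤ R) (ht : 0 ≤ t) (hn1 : t - R ≤ n) :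
    Real.exp (-n ^ 2 / 2) ≤ Real.exp (R * t - t ^ 2 / 2) := by
  apply Real.exp_le_exp.mpr
  rcases le_or_gt t R with h | h
  · nlinarith [sq_nonneg n]
  · nlinarith [sq_nonneg (n - (t - R))]

lemma helper0 {a b R t n S Q : ℝ} (ha : 0 ≤ a) (hb : 0 ≤ b) (hR : 0 ≤ R) (ht : 0 ≤ t)
    (htS : t ≤ S) (hQ : t ^ 2 = Q) (hn1 : t - R ≤ n) :
    (a + b * t) * Real.exp (-n ^ 2 / 2) ≤ (a + b) * Real.exp ((R + 2) * S - Q / 2) := by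
  have h1 : a + b * t ≤ (a + b) * Real.exp t := by
    have h2 : (1:ℝ) ≤ Real.exp t := Real.one_le_exp ht
    nlinarith [Real.add_one_le_exp t]
  calc (a + b * t) * Real.exp (-n ^ 2 / 2)
      ≤ ((a + b) * Real.exp t) * Real.exp (R * t - t ^ 2 / 2) := by
        apply mul_le_mul h1 (exp_quad_bound hR ht hn1) (Real.exp_pos _).le
        positivity
    _ = (a + b) * Real.exp (t + (R * t - t ^ 2 / 2)) := by rw [Real.exp_add]; ring
    _ ≤ (a + b) * Real.exp ((R + 2) * S - Q / 2) := by
        have hS : 0 ≤ S := ht.trans htS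
        apply mul_le_mul_of_nonneg_left (Real.exp_le_exp.mpr (by nlinarith)) (by positivity)

lemma helper1 {a b R t n S Q : ℝ} (ha : 0 ≤ a) (hb : 0 ≤ b) (hR : 0 ≤ R) (ht : 0 ≤ t)
    (htS : t ≤ S) (hQ : t ^ 2 = Q) (hn0 : 0 ≤ n) (hn1 : t - R ≤ n) (hn2 : n ≤ t + R) :
    (a + b * t) * Real.exp (-n ^ 2 / 2) * n
      ≤ (a + b) * (1 + R) * Real.exp ((R + 2) * S - Q / 2) := by
  have h1 : a + b * t ≤ (a + b) * Real.exp t := by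
    have h2 : (1:ℝ) ≤ Real.exp t := Real.one_le_exp ht
    nlinarith [Real.add_one_le_exp t]
  have h3 : n ≤ (1 + R) * Real.exp t := by
    have h2 : (1:ℝ) ≤ Real.exp t := Real.one_le_exp ht
    nlinarith [Real.add_one_le_exp t]
  calc (a + b * t) * Real.exp (-n ^ 2 / 2) * n
      ≤ ((a + b) * Real.exp t) * Real.exp (R * t - t ^ 2 / 2) * ((1 + R) * Real.exp t) := by
        apply mul_le_mul _ h3 hn0 (by positivity)
        apply mul_le_mul h1 (exp_quad_bound hR ht hn1) (Real.exp_pos _).le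
        positivity
    _ = (a + b) * (1 + R) * Real.exp (t + (R * t - t ^ 2 / 2) + t) := by
        rw [Real.exp_add, Real.exp_add]; ring
    _ ≤ (a + b) * (1 + R) * Real.exp ((R + 2) * S - Q / 2) := by
        have hS : 0 ≤ S := ht.trans htS
        apply mul_le_mul_of_nonneg_left (Real.exp_le_exp.mpr (by nlinarith)) (by positivity)

lemma hasFDerivAt_gauss {E : Type*} [NormedAddCommGroup E] [InnerProductSpace ℝ E]
    (z c r : ℝ) (b x : E) :
    HasFDerivAt (fun x : E => z * (c * Real.exp (-‖b - r • x‖ ^ 2 / 2)))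
      (innerSL ℝ ((z * (r * (c * Real.exp (-‖b - r • x‖ ^ 2 / 2)))) • (b - r • x))) x := by
  have h0 : HasFDerivAt (fun x : E => b - r • x)
      (-(r • ContinuousLinearMap.id ℝ E)) x := by
    simpa using ((hasFDerivAt_id x).const_smul r).const_sub b
  have h1 := (hasStrictFDerivAt_norm_sq (b - r • x)).hasFDerivAt
  have h2 := h1.comp x h0
  have h3 := ((h2.const_mul (-(2⁻¹) : ℝ))).exp.const_mul c
  have h4 := h3.const_mul z
  have heq : ∀ y : E, -‖b - r • y‖ ^ 2 / 2
      = -(2⁻¹) * ((fun v : E => ‖v‖ ^ 2) ∘ fun y : E => b - r • y) y := fun y => by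
    simp [Function.comp]; ring
  simp_rw [heq]
  refine h4.congr_fderiv ?_
  ext h
  simp only [Function.comp, innerSL_apply_apply, ContinuousLinearMap.coe_smul', Pi.smul_apply,
    ContinuousLinearMap.coe_comp', Function.comp_apply, ContinuousLinearMap.neg_apply,
    ContinuousLinearMap.coe_id', id_eq, ContinuousLinearMap.smul_apply, two_smul,
    ContinuousLinearMap.add_apply, smul_eq_mul, real_inner_smul_left, inner_neg_right,
    real_inner_smul_right]
  ring

/-- Integrand of the smoothed function, written as an integral against Lebesgue measure. -/
noncomputable def Faux (N : ℕ) (ζ : EuclideanSpace ℝ (Fin N) → ℝ) (δ : ℝ)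
    (x : EuclideanSpace ℝ (Fin N)) (w : Fin N → ℝ) : ℝ :=
  ζ (δ • evec N w) * (Cg N * Real.exp (-‖evec N w - δ⁻¹ • x‖ ^ 2 / 2))

/-- Integrand of the gradient formula. -/
noncomputable def Gaux (N : ℕ) (ζ : EuclideanSpace ℝ (Fin N) → ℝ) (δ : ℝ)
    (x : EuclideanSpace ℝ (Fin N)) (w : Fin N → ℝ) : EuclideanSpace ℝ (Fin N) :=
  (ζ (δ • evec N w) * (δ⁻¹ * (Cg N * Real.exp (-‖evec N w - δ⁻¹ • x‖ ^ 2 / 2))))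
    • (evec N w - δ⁻¹ • x)

lemma claimA (N : ℕ) (ζ : EuclideanSpace ℝ (Fin N) → ℝ) (δ : ℝ) (hδ : 0 < δ)
    (x : EuclideanSpace ℝ (Fin N)) :
    ∫ w, ζ (x + δ • evec N w) ∂(stdGaussianPi N) = ∫ w, Faux N ζ δ x w := by
  calc ∫ w, ζ (x + δ • evec N w) ∂(stdGaussianPi N)
      = ∫ w, (Cg N * Real.exp (-‖evec N w‖ ^ 2 / 2)) • ζ (x + δ • evec N w) :=
        integral_stdGaussianPi N _
    _ = ∫ w, (fun w => (Cg N * Real.exp (-‖evec N w‖ ^ 2 / 2)) • ζ (x + δ • evec N w))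
          (w - δ⁻¹ • fun i => x i) :=
        (integral_sub_right_eq_self _ (δ⁻¹ • fun i => x i)).symm
    _ = ∫ w, Faux N ζ δ x w := by
        refine integral_congr_ae (Filter.Eventually.of_forall fun w => ?_)
        have hv : evec N (w - δ⁻¹ • fun i => x i) = evec N w - δ⁻¹ • x := rfl
        show (Cg N * Real.exp (-‖evec N (w - δ⁻¹ • fun i => x i)‖ ^ 2 / 2))
            • ζ (x + δ • evec N (w - δ⁻¹ • fun i => x i)) = _
        rw [hv]
        have harg : x + δ • (evec N w - δ⁻¹ • x) = δ • evec N w := by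
          rw [smul_sub, smul_smul, mul_inv_cancel₀ hδ.ne', one_smul]; abel
        rw [harg, Faux, smul_eq_mul, mul_comm]

lemma claimC (N : ℕ) (ζ : EuclideanSpace ℝ (Fin N) → ℝ) (δ : ℝ) (hδ : 0 < δ)
    (u : EuclideanSpace ℝ (Fin N)) :
    ∫ w, Gaux N ζ δ u w
      = δ⁻¹ • ∫ w, ζ (u + δ • evec N w) • evec N w ∂(stdGaussianPi N) := by
  symm
  calc δ⁻¹ • ∫ w, ζ (u + δ • evec N w) • evec N w ∂(stdGaussianPi N)
      = δ⁻¹ • ∫ w, (Cg N * Real.exp (-‖evec N w‖ ^ 2 / 2))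
          • (ζ (u + δ • evec N w) • evec N w) := by rw [integral_stdGaussianPi N]
    _ = ∫ w, δ⁻¹ • ((Cg N * Real.exp (-‖evec N w‖ ^ 2 / 2))
          • (ζ (u + δ • evec N w) • evec N w)) := (integral_smul _ _).symm
    _ = ∫ w, (fun w => δ⁻¹ • ((Cg N * Real.exp (-‖evec N w‖ ^ 2 / 2))
          • (ζ (u + δ • evec N w) • evec N w))) (w - δ⁻¹ • fun i => u i) :=
        (integral_sub_right_eq_self _ (δ⁻¹ • fun i => u i)).symm
    _ = ∫ w, Gaux N ζ δ u w := by
        refine integral_congr_ae (Filter.Eventually.of_forall fun w => ?_)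
        have hv : evec N (w - δ⁻¹ • fun i => u i) = evec N w - δ⁻¹ • u := rfl
        show δ⁻¹ • ((Cg N * Real.exp (-‖evec N (w - δ⁻¹ • fun i => u i)‖ ^ 2 / 2))
            • (ζ (u + δ • evec N (w - δ⁻¹ • fun i => u i))
              • evec N (w - δ⁻¹ • fun i => u i))) = _
        rw [hv]
        have harg : u + δ • (evec N w - δ⁻¹ • u) = δ • evec N w := by
          rw [smul_sub, smul_smul, mul_inv_cancel₀ hδ.ne', one_smul]; abel
        rw [harg, Gaux, smul_smul, smul_smul]
        congr 1
        ring

lemma claimB (N : ℕ) (L0 δ : ℝ) (hδ : 0 < δ) (hL0 : 0 ≤ L0)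
    (ζ : EuclideanSpace ℝ (Fin N) → ℝ)
    (hLip : ∀ x y, |ζ x - ζ y| ≤ L0 * ‖x - y‖) (hζc : Continuous ζ)
    (x₀ : EuclideanSpace ℝ (Fin N)) :
    Integrable (Gaux N ζ δ x₀) ∧
      HasFDerivAt (fun x => ∫ w, Faux N ζ δ x w)
        (innerSL ℝ (∫ w, Gaux N ζ δ x₀ w)) x₀ := by
  have hCg := Cg_pos N
  have hδi : (0:ℝ) < δ⁻¹ := inv_pos.mpr hδ
  set R : ℝ := δ⁻¹ * (‖x₀‖ + 1) with hRdef
  have hR0 : 0 ≤ R := by positivity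
  set bound : (Fin N → ℝ) → ℝ := fun w =>
    (δ⁻¹ * Cg N * ((|ζ 0| + L0 * δ) * (1 + R)))
      * Real.exp ((R + 2) * (∑ i, |w i|) - (∑ i, (w i) ^ 2) / 2) with hbounddef
  set bound2 : (Fin N → ℝ) → ℝ := fun w =>
    (Cg N * (|ζ 0| + L0 * δ))
      * Real.exp ((R + 2) * (∑ i, |w i|) - (∑ i, (w i) ^ 2) / 2) with hbound2def
  -- basic estimates
  have hvb : ∀ x ∈ Metric.ball x₀ 1, ∀ w : Fin N → ℝ,
      ‖evec N w‖ - R ≤ ‖evec N w - δ⁻¹ • x‖ ∧ ‖evec N w - δ⁻¹ • x‖ ≤ ‖evec N w‖ + R := by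
    intro x hx w
    have hxn : ‖x‖ ≤ ‖x₀‖ + 1 := by
      have h1 := mem_ball_iff_norm.mp hx
      have h2 := norm_sub_norm_le x x₀
      linarith
    have h3 : ‖δ⁻¹ • x‖ ≤ R := by
      rw [norm_smul, Real.norm_eq_abs, abs_of_pos hδi, hRdef]
      exact mul_le_mul_of_nonneg_left hxn hδi.le
    constructor
    · have := norm_sub_norm_le (evec N w) (δ⁻¹ • x)
      linarith
    · have := norm_sub_le (evec N w) (δ⁻¹ • x)
      linarith
  have hz : ∀ w : Fin N → ℝ, |ζ (δ • evec N w)| ≤ |ζ 0| + (L0 * δ) * ‖evec N w‖ := by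
    intro w
    have h1 := hLip (δ • evec N w) 0
    rw [sub_zero, norm_smul, Real.norm_eq_abs, abs_of_pos hδ] at h1
    have h2 := abs_sub_abs_le_abs_sub (ζ (δ • evec N w)) (ζ 0)
    nlinarith
  -- key bounds
  have hkeyG : ∀ x ∈ Metric.ball x₀ 1, ∀ w, ‖Gaux N ζ δ x w‖ ≤ bound w := by
    intro x hx w
    obtain ⟨hlow, hhigh⟩ := hvb x hx w
    have hnorm : ‖Gaux N ζ δ x w‖ = |ζ (δ • evec N w)|
        * (δ⁻¹ * (Cg N * Real.exp (-‖evec N w - δ⁻¹ • x‖ ^ 2 / 2)))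
        * ‖evec N w - δ⁻¹ • x‖ := by
      rw [Gaux, norm_smul, Real.norm_eq_abs, abs_mul, abs_mul, abs_mul,
        abs_of_pos hδi, abs_of_pos hCg, abs_of_pos (Real.exp_pos _)]
    rw [hnorm]
    have hstep : |ζ (δ • evec N w)|
        * Real.exp (-‖evec N w - δ⁻¹ • x‖ ^ 2 / 2) * ‖evec N w - δ⁻¹ • x‖
        ≤ (|ζ 0| + L0 * δ) * (1 + R)
          * Real.exp ((R + 2) * (∑ i, |w i|) - (∑ i, (w i) ^ 2) / 2) := by
      calc |ζ (δ • evec N w)| * Real.exp (-‖evec N w - δ⁻¹ • x‖ ^ 2 / 2)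
              * ‖evec N w - δ⁻¹ • x‖
          ≤ (|ζ 0| + (L0 * δ) * ‖evec N w‖)
              * Real.exp (-‖evec N w - δ⁻¹ • x‖ ^ 2 / 2) * ‖evec N w - δ⁻¹ • x‖ := by
            apply mul_le_mul_of_nonneg_right _ (norm_nonneg _)
            exact mul_le_mul_of_nonneg_right (hz w) (Real.exp_pos _).le
        _ ≤ (|ζ 0| + L0 * δ) * (1 + R)
              * Real.exp ((R + 2) * (∑ i, |w i|) - (∑ i, (w i) ^ 2) / 2) :=
            helper1 (abs_nonneg _) (by positivity) hR0 (norm_nonneg _)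
              (norm_evec_le_sum N w) (norm_evec_sq N w) (norm_nonneg _) hlow hhigh
    calc |ζ (δ • evec N w)|
        * (δ⁻¹ * (Cg N * Real.exp (-‖evec N w - δ⁻¹ • x‖ ^ 2 / 2)))
        * ‖evec N w - δ⁻¹ • x‖
        = (δ⁻¹ * Cg N) * (|ζ (δ • evec N w)|
            * Real.exp (-‖evec N w - δ⁻¹ • x‖ ^ 2 / 2) * ‖evec N w - δ⁻¹ • x‖) := by ring
      _ ≤ (δ⁻¹ * Cg N) * ((|ζ 0| + L0 * δ) * (1 + R)
            * Real.exp ((R + 2) * (∑ i, |w i|) - (∑ i, (w i) ^ 2) / 2)) :=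
          mul_le_mul_of_nonneg_left hstep (by positivity)
      _ = bound w := by rw [hbounddef]; ring
  have hkeyF : ∀ w, |Faux N ζ δ x₀ w| ≤ bound2 w := by
    intro w
    obtain ⟨hlow, _⟩ := hvb x₀ (Metric.mem_ball_self one_pos) w
    have hnorm : |Faux N ζ δ x₀ w| = |ζ (δ • evec N w)|
        * (Cg N * Real.exp (-‖evec N w - δ⁻¹ • x₀‖ ^ 2 / 2)) := by
      rw [Faux, abs_mul, abs_mul, abs_of_pos hCg, abs_of_pos (Real.exp_pos _)]
    rw [hnorm]
    have hstep : |ζ (δ • evec N w)| * Real.exp (-‖evec N w - δ⁻¹ • x₀‖ ^ 2 / 2)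
        ≤ (|ζ 0| + L0 * δ)
          * Real.exp ((R + 2) * (∑ i, |w i|) - (∑ i, (w i) ^ 2) / 2) := by
      calc |ζ (δ • evec N w)| * Real.exp (-‖evec N w - δ⁻¹ • x₀‖ ^ 2 / 2)
          ≤ (|ζ 0| + (L0 * δ) * ‖evec N w‖)
              * Real.exp (-‖evec N w - δ⁻¹ • x₀‖ ^ 2 / 2) :=
            mul_le_mul_of_nonneg_right (hz w) (Real.exp_pos _).le
        _ ≤ (|ζ 0| + L0 * δ)
              * Real.exp ((R + 2) * (∑ i, |w i|) - (∑ i, (w i) ^ 2) / 2) :=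
            helper0 (abs_nonneg _) (by positivity) hR0 (norm_nonneg _)
              (norm_evec_le_sum N w) (norm_evec_sq N w) hlow
    calc |ζ (δ • evec N w)| * (Cg N * Real.exp (-‖evec N w - δ⁻¹ • x₀‖ ^ 2 / 2))
        = Cg N * (|ζ (δ • evec N w)| * Real.exp (-‖evec N w - δ⁻¹ • x₀‖ ^ 2 / 2)) := by ring
      _ ≤ Cg N * ((|ζ 0| + L0 * δ)
            * Real.exp ((R + 2) * (∑ i, |w i|) - (∑ i, (w i) ^ 2) / 2)) :=
          mul_le_mul_of_nonneg_left hstep hCg.le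
      _ = bound2 w := by rw [hbound2def]; ring
  -- continuity
  have hevc := continuous_evec N
  have hexpc : ∀ x : EuclideanSpace ℝ (Fin N),
      Continuous fun w : Fin N → ℝ =>
        Cg N * Real.exp (-‖evec N w - δ⁻¹ • x‖ ^ 2 / 2) := fun x =>
    continuous_const.mul (Real.continuous_exp.comp
      ((((hevc.sub continuous_const).norm.pow 2).neg).div_const 2))
  have hFc : ∀ x, Continuous (fun w => Faux N ζ δ x w) := fun x =>
    (hζc.comp (hevc.const_smul δ)).mul (hexpc x)
  have hGc : ∀ x, Continuous (fun w => Gaux N ζ δ x w) := fun x =>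
    ((hζc.comp (hevc.const_smul δ)).mul (continuous_const.mul (hexpc x))).smul
      (hevc.sub continuous_const)
  -- integrability
  have hboundInt : Integrable bound := by
    rw [hbounddef]
    exact (integrable_master N (R + 2)).const_mul _
  have hbound2Int : Integrable bound2 := by
    rw [hbound2def]
    exact (integrable_master N (R + 2)).const_mul _
  have hGint : Integrable (Gaux N ζ δ x₀) :=
    Integrable.mono' hboundInt (hGc x₀).aestronglyMeasurable
      (Filter.Eventually.of_forall (hkeyG x₀ (Metric.mem_ball_self one_pos)))
  have hFint : Integrable (Faux N ζ δ x₀) :=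
    Integrable.mono' hbound2Int (hFc x₀).aestronglyMeasurable
      (Filter.Eventually.of_forall fun w => by
        rw [Real.norm_eq_abs]; exact hkeyF w)
  refine ⟨hGint, ?_⟩
  have H := hasFDerivAt_integral_of_dominated_of_fderiv_le
    (𝕜 := ℝ) (μ := (volume : Measure (Fin N → ℝ)))
    (F := fun x w => Faux N ζ δ x w)
    (F' := fun x w => innerSL ℝ (Gaux N ζ δ x w)) (bound := bound)
    (Metric.ball_mem_nhds x₀ one_pos)
    (Filter.Eventually.of_forall fun x => (hFc x).aestronglyMeasurable)
    hFint
    (((innerSL ℝ).continuous.comp (hGc x₀)).aestronglyMeasurable)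
    (Filter.Eventually.of_forall fun w x hx => by
      rw [innerSL_apply_norm]; exact hkeyG x hx w)
    hboundInt
    (Filter.Eventually.of_forall fun w x hx =>
      hasFDerivAt_gauss (ζ (δ • evec N w)) (Cg N) δ⁻¹ (evec N w) x)
  rwa [ContinuousLinearMap.integral_comp_comm (innerSL ℝ) hGint] at H

end Auxiliary

/-- Gaussian smoothing of a Lipschitz function is differentiable, with gradient
`∇ζ_δ(u) = (1/δ) E[ζ(u + δ v) v]`. -/
theorem gaussian_smoothing_gradient
    (N : ℕ) (hN : 1 ≤ N) (L0 δ : ℝ) (hδ : 0 < δ)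
    (ζ : EuclideanSpace ℝ (Fin N) → ℝ)
    (hLip : ∀ x y, |ζ x - ζ y| ≤ L0 * ‖x - y‖) :
    let ζδ : EuclideanSpace ℝ (Fin N) → ℝ :=
      fun u => ∫ w, ζ (u + δ • evec N w) ∂(stdGaussianPi N)
    Differentiable ℝ ζδ ∧
      ∀ u, gradient ζδ u =
        δ⁻¹ • ∫ w, ζ (u + δ • evec N w) • evec N w ∂(stdGaussianPi N) := by
  intro ζδ
  have hL0 : 0 ≤ L0 := by
    have key := hLip (EuclideanSpace.single ⟨0, hN⟩ (1:ℝ)) 0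
    rw [sub_zero, EuclideanSpace.norm_single, norm_one] at key
    nlinarith [abs_nonneg (ζ (EuclideanSpace.single ⟨0, hN⟩ (1:ℝ)) - ζ 0)]
  have hζc : Continuous ζ := by
    have hl : LipschitzWith (Real.toNNReal L0) ζ := LipschitzWith.of_dist_le_mul fun x y => by
      rw [Real.dist_eq, dist_eq_norm]
      calc |ζ x - ζ y| ≤ L0 * ‖x - y‖ := hLip x y
        _ = Real.toNNReal L0 * ‖x - y‖ := by rw [Real.coe_toNNReal _ hL0]
    exact hl.continuous
  have hgrad : ∀ u : EuclideanSpace ℝ (Fin N),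
      HasGradientAt ζδ (∫ w, Gaux N ζ δ u w) u := by
    intro u
    have hB := (claimB N L0 δ hδ hL0 ζ hLip hζc u).2
    have hfun : ζδ = fun x => ∫ w, Faux N ζ δ x w :=
      funext fun x => claimA N ζ δ hδ x
    rw [hfun]
    have hdual : (InnerProductSpace.toDual ℝ (EuclideanSpace ℝ (Fin N)))
        (∫ w, Gaux N ζ δ u w) = innerSL ℝ (∫ w, Gaux N ζ δ u w) := by
      ext y; simp [InnerProductSpace.toDual_apply_apply]
    exact hasGradientAt_iff_hasFDerivAt.mpr (hdual ▸ hB)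
  refine ⟨fun u => (hgrad u).differentiableAt, fun u => ?_⟩
  rw [(hgrad u).gradient, claimC N ζ δ hδ u]
end
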